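/- Load-store elimination is semantics-preserving: if a program contains 't := load M' followed later by 'store M t', with no intervening assignment to t and no intervening store to address M, then deleting the store yields a program with the same final memory and store for every initial state. -/

import Mathlib

inductive Expr (Var : Type) where
  | var : Var → Expr Var
  | const : ℤ → Expr Var
  | add : Expr Var → Expr Var → Expr Var
  | sub : Expr Var → Expr Var → Expr Var
  | mul : Expr Var → Expr Var → Expr Var

def Expr.eval {Var : Type} (σ : Var → ℤ) : Expr Var → ℤ
  | .var x => σ x
  | .const n => n
  | .add a b => a.eval σ + b.eval σ
  | .sub a b => a.eval σ - b.eval σ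
  | .mul a b => a.eval σ * b.eval σ

inductive Stmt (Var Addr : Type) where
  | assign : Var → Expr Var → Stmt Var Addr
  | store : Addr → Expr Var → Stmt Var Addr
  | load : Var → Addr → Stmt Var Addr

def run {Var Addr : Type} [DecidableEq Var] [DecidableEq Addr] :
    List (Stmt Var Addr) → (Var → ℤ) × (Addr → ℤ) → (Var → ℤ) × (Addr → ℤ)
  | [], s => s
  | .assign v e :: p, (σ, μ) => run p (Function.update σ v (e.eval σ), μ)
  | .store a e :: p, (σ, μ) => run p (σ, Function.update μ a (e.eval σ))
  | .load v a :: p, (σ, μ) => run p (Function.update σ v (μ a), μ)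

theorem run_append {Var Addr : Type} [DecidableEq Var] [DecidableEq Addr]
    (p q : List (Stmt Var Addr)) (st : (Var → ℤ) × (Addr → ℤ)) :
    run (p ++ q) st = run q (run p st) := by
  induction p generalizing st with
  | nil => rfl
  | cons s p ih =>
    obtain ⟨σ, μ⟩ := st
    cases s <;> simp [run, ih]

theorem key {Var Addr : Type} [DecidableEq Var] [DecidableEq Addr]
    (mid : List (Stmt Var Addr)) (t : Var) (M : Addr)
    (hmid : ∀ s ∈ mid, (∀ e : Expr Var, s ≠ .assign t e) ∧
      (∀ b : Addr, s ≠ .load t b) ∧ (∀ e : Expr Var, s ≠ .store M e)) :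
    ∀ st : (Var → ℤ) × (Addr → ℤ),
      (run mid st).1 t = st.1 t ∧ (run mid st).2 M = st.2 M := by
  induction mid with
  | nil => intro st; exact ⟨rfl, rfl⟩
  | cons s p ih =>
    intro ⟨σ, μ⟩
    obtain ⟨h1, h2, h3⟩ := hmid s List.mem_cons_self
    have ih' := fun st => ih (fun x hx => hmid x (List.mem_cons_of_mem _ hx)) st
    cases s with
    | assign v e =>
      have hv : v ≠ t := fun h => h1 e (by rw [h])
      have h := ih' (Function.update σ v (Expr.eval σ e), μ)
      simp only [run]
      simpa [Function.update_of_ne (Ne.symm hv)] using h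
    | store a e =>
      have ha : a ≠ M := fun h => h3 e (by rw [h])
      have h := ih' (σ, Function.update μ a (Expr.eval σ e))
      simp only [run]
      simpa [Function.update_of_ne (Ne.symm ha)] using h
    | load v a =>
      have hv : v ≠ t := fun h => h2 a (by rw [h])
      have h := ih' (Function.update σ v (μ a), μ)
      simp only [run]
      simpa [Function.update_of_ne (Ne.symm hv)] using h

/-- Load-store elimination is semantics-preserving: if `t := load M` is
followed later by `store M t`, with no intervening write to `t` and no
intervening store to `M`, then deleting the store yields a program with the
same final state for every initial state. -/
theorem loadStoreElim_preserves_semantics {Var Addr : Type}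
    [DecidableEq Var] [DecidableEq Addr]
    (p₁ mid p₃ : List (Stmt Var Addr)) (t : Var) (M : Addr)
    (hmid : ∀ s ∈ mid, (∀ e : Expr Var, s ≠ .assign t e) ∧
      (∀ b : Addr, s ≠ .load t b) ∧ (∀ e : Expr Var, s ≠ .store M e)) :
    ∀ st : (Var → ℤ) × (Addr → ℤ),
      run (p₁ ++ [.load t M] ++ mid ++ [.store M (.var t)] ++ p₃) st
        = run (p₁ ++ [.load t M] ++ mid ++ p₃) st := by
  intro st
  simp only [run_append]
  obtain ⟨σ, μ⟩ := run p₁ st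
  have hload : run [Stmt.load t M] (σ, μ) = (Function.update σ t (μ M), μ) := rfl
  rw [hload]
  obtain ⟨h1, h2⟩ := key mid t M hmid (Function.update σ t (μ M), μ)
  rcases hEq : run mid (Function.update σ t (μ M), μ) with ⟨σ', μ'⟩
  rw [hEq] at h1 h2
  have : σ' t = μ' M := by simp at h1 h2; exact h1.trans h2.symm
  simp [run, Expr.eval, this, Function.update_eq_self]
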